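/- Let E ∈ M_n(𝕋) be the matrix all of whose entries equal 0 ∈ ℝ (the multiplicative identity of 𝕋). A matrix A = [a_{i,j}] ∈ M_n(𝕋) commutes with E if and only if there exists a ∈ 𝕋 such that max_j a_{i,j} = a for every row i = 1, ..., n and max_i a_{i,j} = a for every column j = 1, ..., n. -/

import Mathlib

/-- The max-plus tropical semiring `ℝ ∪ {-∞}`, realized as the `Tropical` semiring on the
order dual of `WithBot ℝ`. -/
noncomputable instance : LinearOrderedAddCommMonoidWithTop ((WithBot ℝ)ᵒᵈ) :=
  { (inferInstance : AddCommMonoid ((WithBot ℝ)ᵒᵈ)),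
    (inferInstance : LinearOrder ((WithBot ℝ)ᵒᵈ)),
    (inferInstance : IsOrderedAddMonoid ((WithBot ℝ)ᵒᵈ)),
    (inferInstance : OrderTop ((WithBot ℝ)ᵒᵈ)) with
    top_add' := fun a => WithBot.bot_add a
    isAddLeftRegular_of_ne_top := fun _ ha _ _ h => WithBot.add_left_cancel (α := ℝ) ha h }

abbrev Trop : Type := Tropical ((WithBot ℝ)ᵒᵈ)


/-- A matrix `A ∈ M_n(𝕋)` commutes with the all-ones matrix `E` (all entries equal to the
multiplicative identity `0 ∈ ℝ` of the tropical semiring) iff there is `a ∈ 𝕋` such that the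
maximum of every row of `A` equals `a` and the maximum of every column of `A` equals `a`
(tropical sums are maxima). -/
theorem commute_allOnes_iff (n : ℕ) (A E : Matrix (Fin n) (Fin n) Trop)
    (hE : ∀ i j, E i j = 1) :
    A * E = E * A ↔
      ∃ a : Trop, (∀ i, ∑ j, A i j = a) ∧ (∀ j, ∑ i, A i j = a) := by
  have key : ∀ i j, (A * E) i j = ∑ k, A i k := by
    intro i j; simp [Matrix.mul_apply, hE]
  have key2 : ∀ i j, (E * A) i j = ∑ k, A k j := by
    intro i j; simp [Matrix.mul_apply, hE]
  constructor
  · intro h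
    rcases Nat.eq_zero_or_pos n with hn | hn
    · subst hn; exact ⟨1, fun i => i.elim0, fun j => j.elim0⟩
    · have i0 : Fin n := ⟨0, hn⟩
      refine ⟨∑ j, A i0 j, ?_, ?_⟩
      · intro i
        have h1 := congrFun (congrFun h i) i0
        have h2 := congrFun (congrFun h i0) i0
        rw [key, key2] at h1
        rw [key, key2] at h2
        rw [h1, ← h2]
      · intro j
        have h1 := congrFun (congrFun h i0) j
        rw [key, key2] at h1
        rw [← h1]
  · rintro ⟨a, hr, hc⟩
    ext i j
    rw [key, key2, hr i, hc j]
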